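/- Let m, n be positive integers and A an m×n real matrix such that the transpose Aᵀ is σ-very well approximable for some σ > m/n (i.e., there are infinitely many pairs (p, q) ∈ ℤ^n × ℤ^m with ‖Aᵀq + p‖ ≤ ‖q‖^{−σ}). Set μ = (m/n + σ)/2. Then for every c > 0, the set D_{c,μ} of all γ ∈ ℝ^m such that there exist arbitrarily large Q with the property that for every q ∈ ℤ^n with ‖q‖ < Q and every p ∈ ℤ^m one has ‖Aq − p − γ‖ > c·Q^{−1/μ}, has Hausdorff dimension m. -/

import Mathlib

open Matrix Set MeasureTheory Filter Topology
open scoped NNReal ENNReal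

private lemma dot_abs_le' {k : ℕ} (v w : Fin k → ℝ) : |v ⬝ᵥ w| ≤ k * ‖v‖ * ‖w‖ := by
  calc |v ⬝ᵥ w| ≤ ∑ i, |v i * w i| := Finset.abs_sum_le_sum_abs _ _
    _ ≤ ∑ _i : Fin k, ‖v‖ * ‖w‖ := by
        refine Finset.sum_le_sum fun i _ => ?_
        rw [abs_mul]
        exact mul_le_mul (norm_le_pi_norm v i) (norm_le_pi_norm w i) (abs_nonneg _)
          (norm_nonneg _)
    _ = k * ‖v‖ * ‖w‖ := by simp [mul_assoc]

private lemma one_le_norm_intCast' {k : ℕ} {y : Fin k → ℤ} (h : y ≠ 0) :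
    1 ≤ ‖(fun i => (y i : ℝ))‖ := by
  obtain ⟨i, hi⟩ := Function.ne_iff.mp h
  have h1 : (1 : ℝ) ≤ |(y i : ℝ)| := by
    rw [← Int.cast_abs]
    exact_mod_cast Int.one_le_abs (by simpa using hi)
  exact h1.trans (norm_le_pi_norm (fun i => (y i : ℝ)) i)

private lemma finite_int_vec_norm_le' (k : ℕ) (C : ℝ) :
    {v : Fin k → ℤ | ‖(fun i => (v i : ℝ))‖ ≤ C}.Finite := by
  apply Set.Finite.subset (Set.finite_Icc (fun _ : Fin k => -⌈C⌉) fun _ => ⌈C⌉)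
  intro v hv
  have h : ∀ i, |(v i : ℝ)| ≤ C := fun i => (norm_le_pi_norm (fun i => (v i : ℝ)) i).trans hv
  constructor <;> intro i
  · have := (abs_le.mp (h i)).1
    have h2 : (-⌈C⌉ : ℝ) ≤ (v i : ℝ) := le_trans (by simpa using neg_le_neg (Int.le_ceil C)) this
    exact_mod_cast h2
  · have := (abs_le.mp (h i)).2
    have h2 : (v i : ℝ) ≤ (⌈C⌉ : ℝ) := this.trans (Int.le_ceil C)
    exact_mod_cast h2

private lemma exists_big_y' (m n : ℕ) (A : Matrix (Fin m) (Fin n) ℝ) (σ : ℝ) (hσ0 : 0 < σ)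
    (hA : {pq : (Fin n → ℤ) × (Fin m → ℤ) |
      ‖Aᵀ.mulVec (fun i => (pq.2 i : ℝ)) + (fun i => (pq.1 i : ℝ))‖ ≤
        ‖(fun i => (pq.2 i : ℝ))‖ ^ (-σ)}.Infinite) :
    ∀ T : ℝ, ∃ pq : (Fin n → ℤ) × (Fin m → ℤ),
      (‖Aᵀ.mulVec (fun i => (pq.2 i : ℝ)) + (fun i => (pq.1 i : ℝ))‖ ≤
        ‖(fun i => (pq.2 i : ℝ))‖ ^ (-σ)) ∧ T ≤ ‖(fun i => (pq.2 i : ℝ))‖ := by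
  intro T
  by_contra hcon
  push_neg at hcon
  set K : ℝ := ∑ j, ∑ i, |A i j| with hK
  have hK0 : 0 ≤ K := Finset.sum_nonneg fun j _ => Finset.sum_nonneg fun i _ => abs_nonneg _
  have hmv : ∀ v : Fin m → ℝ, ‖Aᵀ.mulVec v‖ ≤ K * ‖v‖ := by
    intro v
    refine pi_norm_le_iff_of_nonneg (by positivity) |>.mpr fun j => ?_
    have : ‖Aᵀ.mulVec v j‖ ≤ ∑ i, |A i j| * ‖v‖ := by
      rw [Matrix.mulVec, dotProduct]
      refine (Finset.abs_sum_le_sum_abs _ _).trans (Finset.sum_le_sum fun i _ => ?_)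
      rw [abs_mul, Matrix.transpose_apply]
      exact mul_le_mul_of_nonneg_left (norm_le_pi_norm v i) (abs_nonneg _)
    refine this.trans ?_
    rw [← Finset.sum_mul]
    refine mul_le_mul_of_nonneg_right ?_ (norm_nonneg _)
    exact Finset.single_le_sum (f := fun j => ∑ i, |A i j|)
      (fun j _ => Finset.sum_nonneg fun i _ => abs_nonneg _) (Finset.mem_univ j)
  apply hA
  have hfin := (finite_int_vec_norm_le' n (1 + K * |T|)).prod (finite_int_vec_norm_le' m |T|)
  refine hfin.subset fun pq hpq => ?_
  have hmem : ‖Aᵀ.mulVec (fun i => (pq.2 i : ℝ)) + (fun i => (pq.1 i : ℝ))‖ ≤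
      ‖(fun i => (pq.2 i : ℝ))‖ ^ (-σ) := hpq
  have hyT : ‖(fun i => (pq.2 i : ℝ))‖ < T := hcon pq hmem
  have hrle : ‖(fun i => (pq.2 i : ℝ))‖ ^ (-σ) ≤ 1 := by
    by_cases hy : pq.2 = 0
    · have : ‖(fun i => (pq.2 i : ℝ))‖ = 0 := by
        have h0 : (fun i => ((pq.2 : Fin m → ℤ) i : ℝ)) = 0 := by funext i; simp [hy]
        rw [h0, norm_zero]
      rw [this, Real.zero_rpow (by linarith : -σ ≠ 0)]; norm_num
    · exact Real.rpow_le_one_of_one_le_of_nonpos (one_le_norm_intCast' hy) (by linarith)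
  constructor
  · show ‖(fun i => (pq.1 i : ℝ))‖ ≤ 1 + K * |T|
    have h1 : ‖(fun i => (pq.1 i : ℝ))‖ ≤
        ‖Aᵀ.mulVec (fun i => (pq.2 i : ℝ)) + (fun i => (pq.1 i : ℝ))‖ +
          ‖Aᵀ.mulVec (fun i => (pq.2 i : ℝ))‖ := by
      simpa using norm_sub_le
        (Aᵀ.mulVec (fun i => (pq.2 i : ℝ)) + (fun i => (pq.1 i : ℝ)))
        (Aᵀ.mulVec (fun i => (pq.2 i : ℝ)))
    have h2 : ‖Aᵀ.mulVec (fun i => (pq.2 i : ℝ))‖ ≤ K * |T| := by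
      refine (hmv _).trans (mul_le_mul_of_nonneg_left ?_ hK0)
      exact hyT.le.trans (le_abs_self T)
    linarith
  · show ‖(fun i => (pq.2 i : ℝ))‖ ≤ |T|
    exact hyT.le.trans (le_abs_self T)

private lemma slab_closed' {m : ℕ} (y : Fin m → ℤ) :
    IsClosed {γ : Fin m → ℝ | ∀ j : ℤ, (1:ℝ)/4 ≤ |(fun i => (y i : ℝ)) ⬝ᵥ γ - (j:ℝ)|} := by
  have hg : Continuous fun γ : Fin m → ℝ => (fun i => (y i : ℝ)) ⬝ᵥ γ := by
    simp only [dotProduct]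
    exact continuous_finset_sum _ fun i _ => continuous_const.mul (continuous_apply i)
  have : {γ : Fin m → ℝ | ∀ j : ℤ, (1:ℝ)/4 ≤ |(fun i => (y i : ℝ)) ⬝ᵥ γ - (j:ℝ)|} =
      ⋂ j : ℤ, {γ : Fin m → ℝ | (1:ℝ)/4 ≤ |(fun i => (y i : ℝ)) ⬝ᵥ γ - (j:ℝ)|} := by
    ext γ; simp [Set.mem_iInter]
  rw [this]
  exact isClosed_iInter fun j =>
    isClosed_le continuous_const ((hg.sub continuous_const).abs)

private lemma slab_cover' {m : ℕ} {y : Fin m → ℤ} (hy : y ≠ 0) :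
    ∃ v : Fin m → ℝ, ‖v‖ ≤ 1/2 ∧ ∀ γ : Fin m → ℝ,
      γ ∉ {γ : Fin m → ℝ | ∀ j : ℤ, (1:ℝ)/4 ≤ |(fun i => (y i : ℝ)) ⬝ᵥ γ - (j:ℝ)|} →
      γ + v ∈ {γ : Fin m → ℝ | ∀ j : ℤ, (1:ℝ)/4 ≤ |(fun i => (y i : ℝ)) ⬝ᵥ γ - (j:ℝ)|} := by
  obtain ⟨i, hi⟩ := Function.ne_iff.mp hy
  have hi' : y i ≠ 0 := by simpa using hi
  have habs : (1:ℝ) ≤ |(y i : ℝ)| := by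
    rw [← Int.cast_abs]; exact_mod_cast Int.one_le_abs hi'
  have hyi : (y i : ℝ) ≠ 0 := by exact_mod_cast hi'
  refine ⟨Pi.single i (1/(2*(y i : ℝ))), ?_, ?_⟩
  · refine pi_norm_le_iff_of_nonneg (by norm_num) |>.mpr fun j' => ?_
    rcases eq_or_ne j' i with hj | hj
    · subst hj
      rw [Pi.single_eq_same, Real.norm_eq_abs, abs_div]
      rw [div_le_iff₀ (by positivity)]
      have h2 : |2 * (y j':ℝ)| = 2 * |(y j':ℝ)| := by rw [abs_mul]; norm_num
      rw [h2, abs_one]; linarith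
    · rw [Pi.single_eq_of_ne hj]; norm_num
  · intro γ hγ
    simp only [Set.mem_setOf_eq, not_forall, not_le] at hγ
    obtain ⟨j₀, hj₀⟩ := hγ
    intro j
    have hdot : (fun i' => (y i' : ℝ)) ⬝ᵥ (γ + Pi.single i (1/(2*(y i : ℝ)))) =
        (fun i' => (y i' : ℝ)) ⬝ᵥ γ + 1/2 := by
      rw [dotProduct_add]
      congr 1
      rw [dotProduct]
      rw [Finset.sum_eq_single i]
      · rw [Pi.single_eq_same]; field_simp
      · intro b _ hb; rw [Pi.single_eq_of_ne hb, mul_zero]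
      · intro h; exact absurd (Finset.mem_univ i) h
    rw [hdot]
    set x := (fun i' => (y i' : ℝ)) ⬝ᵥ γ with hx
    rw [abs_lt] at hj₀
    rcases le_or_gt j j₀ with h | h
    · have : (j:ℝ) ≤ (j₀:ℝ) := by exact_mod_cast h
      rw [le_abs]; left; linarith
    · have : (j₀:ℝ) + 1 ≤ (j:ℝ) := by exact_mod_cast h
      rw [le_abs]; right; linarith

private lemma slab_measure' {m : ℕ} {y : Fin m → ℤ} (hy : y ≠ 0) :
    volume (Metric.closedBall (0 : Fin m → ℝ) 1) ≤
      2 * volume ({γ : Fin m → ℝ | ∀ j : ℤ, (1:ℝ)/4 ≤ |(fun i => (y i : ℝ)) ⬝ᵥ γ - (j:ℝ)|} ∩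
        Metric.closedBall 0 2) := by
  set S := {γ : Fin m → ℝ | ∀ j : ℤ, (1:ℝ)/4 ≤ |(fun i => (y i : ℝ)) ⬝ᵥ γ - (j:ℝ)|} with hS
  obtain ⟨v, hv, hcov⟩ := slab_cover' hy
  have hsub : Metric.closedBall (0 : Fin m → ℝ) 1 ⊆
      (S ∩ Metric.closedBall 0 2) ∪ ((fun γ => γ + v) ⁻¹' (S ∩ Metric.closedBall 0 2)) := by
    intro γ hγ
    rw [Metric.mem_closedBall, dist_zero_right] at hγ
    by_cases hγS : γ ∈ S
    · left
      exact ⟨hγS, by rw [Metric.mem_closedBall, dist_zero_right]; linarith⟩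
    · right
      refine ⟨hcov γ hγS, ?_⟩
      rw [Metric.mem_closedBall, dist_zero_right]
      calc ‖γ + v‖ ≤ ‖γ‖ + ‖v‖ := norm_add_le _ _
        _ ≤ 2 := by linarith
  calc volume (Metric.closedBall (0 : Fin m → ℝ) 1)
      ≤ volume ((S ∩ Metric.closedBall 0 2) ∪
          ((fun γ => γ + v) ⁻¹' (S ∩ Metric.closedBall 0 2))) := measure_mono hsub
    _ ≤ volume (S ∩ Metric.closedBall 0 2) +
        volume ((fun γ => γ + v) ⁻¹' (S ∩ Metric.closedBall 0 2)) := measure_union_le _ _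
    _ = 2 * volume (S ∩ Metric.closedBall 0 2) := by
        rw [measure_preimage_add_right, two_mul]

private lemma core_estimate' {m n : ℕ} (hm : 0 < m) (hn : 0 < n)
    (A : Matrix (Fin m) (Fin n) ℝ) (σ : ℝ)
    (y : Fin m → ℤ) (p' : Fin n → ℤ)
    (hy1 : 1 ≤ ‖(fun i => (y i : ℝ))‖)
    (hbound : ‖Aᵀ.mulVec (fun i => (y i : ℝ)) + (fun i => (p' i : ℝ))‖ ≤
      ‖(fun i => (y i : ℝ))‖ ^ (-σ))
    (γ : Fin m → ℝ) (hγ : ∀ j : ℤ, (1:ℝ)/4 ≤ |(fun i => (y i : ℝ)) ⬝ᵥ γ - (j:ℝ)|)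
    (q : Fin n → ℤ)
    (hq : ‖(fun i => (q i : ℝ))‖ < ‖(fun i => (y i : ℝ))‖ ^ σ / (8*n))
    (p : Fin m → ℤ) :
    1/(8*m*‖(fun i => (y i : ℝ))‖) ≤
      ‖A.mulVec (fun i => (q i : ℝ)) - (fun i => (p i : ℝ)) - γ‖ := by
  set yR : Fin m → ℝ := fun i => (y i : ℝ) with hyR
  set qR : Fin n → ℝ := fun i => (q i : ℝ) with hqR
  set pR : Fin m → ℝ := fun i => (p i : ℝ) with hpR
  set p'R : Fin n → ℝ := fun i => (p' i : ℝ) with hp'R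
  set N : ℝ := ‖yR‖ with hN
  have hN0 : (0:ℝ) < N := lt_of_lt_of_le one_pos hy1
  set z : Fin m → ℝ := A.mulVec qR - pR - γ with hz
  set ε : ℝ := (Aᵀ.mulVec yR + p'R) ⬝ᵥ qR with hε
  set j : ℤ := -(p' ⬝ᵥ q) - (y ⬝ᵥ p) with hj
  -- key algebraic identity
  have hid : yR ⬝ᵥ z = ε + (j:ℝ) - yR ⬝ᵥ γ := by
    have h1 : yR ⬝ᵥ z = yR ⬝ᵥ (A.mulVec qR) - yR ⬝ᵥ pR - yR ⬝ᵥ γ := by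
      rw [hz, dotProduct_sub, dotProduct_sub]
    have h2 : yR ⬝ᵥ (A.mulVec qR) = (Aᵀ.mulVec yR) ⬝ᵥ qR := by
      rw [Matrix.dotProduct_mulVec, Matrix.mulVec_transpose]
    have h3 : (Aᵀ.mulVec yR) ⬝ᵥ qR = ε - p'R ⬝ᵥ qR := by
      rw [hε, add_dotProduct]; ring
    have h4 : p'R ⬝ᵥ qR = ((p' ⬝ᵥ q : ℤ) : ℝ) := by
      simp only [hp'R, hqR, dotProduct]
      push_cast; ring
    have h5 : yR ⬝ᵥ pR = ((y ⬝ᵥ p : ℤ) : ℝ) := by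
      simp only [hyR, hpR, dotProduct]
      push_cast; ring
    rw [h1, h2, h3, h4, h5, hj]
    push_cast; ring
  have hQpos : (0:ℝ) < N ^ σ / (8*n) := by
    apply div_pos (Real.rpow_pos_of_pos hN0 σ); positivity
  have hεle : |ε| ≤ 1/8 := by
    have h1 : |ε| ≤ n * ‖Aᵀ.mulVec yR + p'R‖ * ‖qR‖ := dot_abs_le' _ _
    have h2 : (n:ℝ) * ‖Aᵀ.mulVec yR + p'R‖ * ‖qR‖ ≤ n * (N ^ (-σ)) * (N ^ σ / (8*n)) := by
      have hb1 : (n:ℝ) * ‖Aᵀ.mulVec yR + p'R‖ ≤ n * (N ^ (-σ)) :=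
        mul_le_mul_of_nonneg_left hbound (by positivity)
      exact mul_le_mul hb1 hq.le (norm_nonneg _) (by positivity)
    have h3 : (n:ℝ) * (N ^ (-σ)) * (N ^ σ / (8*n)) = 1/8 := by
      rw [Real.rpow_neg hN0.le]
      have hNσ : (0:ℝ) < N ^ σ := Real.rpow_pos_of_pos hN0 σ
      field_simp
    linarith
  have h14 : (1:ℝ)/4 ≤ |yR ⬝ᵥ γ - (j:ℝ)| := hγ j
  have h18 : (1:ℝ)/8 ≤ |yR ⬝ᵥ z| := by
    have habs : |yR ⬝ᵥ γ - (j:ℝ)| ≤ |yR ⬝ᵥ z| + |ε| := by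
      have : yR ⬝ᵥ γ - (j:ℝ) = ε - yR ⬝ᵥ z := by rw [hid]; ring
      rw [this]
      calc |ε - yR ⬝ᵥ z| ≤ |ε| + |yR ⬝ᵥ z| := abs_sub _ _
        _ = |yR ⬝ᵥ z| + |ε| := by ring
    linarith
  have hzN : |yR ⬝ᵥ z| ≤ m * N * ‖z‖ := by
    have := dot_abs_le' yR z
    rwa [← hN] at this
  have hmN : (0:ℝ) < 8 * m * N := by positivity
  rw [div_le_iff₀ hmN]
  nlinarith [norm_nonneg z]

private lemma threshold' (m n : ℕ) (hm : 0 < m) (hn : 0 < n) (σ μ c Q₀ : ℝ)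
    (hσ0 : 0 < σ) (hμ0 : 0 < μ) (hσμ : μ < σ) (hc : 0 < c) :
    ∃ R : ℝ, ∀ N : ℝ, R ≤ N →
      Q₀ < N ^ σ / (8*n) ∧ c * (N ^ σ / (8*n)) ^ (-1/μ) < 1/(8*m*N) := by
  have h8n : (0:ℝ) < 8 * n := by positivity
  have h1 : Tendsto (fun N : ℝ => N ^ σ / (8*n)) atTop atTop :=
    (tendsto_rpow_atTop hσ0).atTop_div_const h8n
  have hexp : (0:ℝ) < σ/μ - 1 := by
    have : (1:ℝ) < σ/μ := (one_lt_div hμ0).mpr hσμ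
    linarith
  have h2 : Tendsto (fun N : ℝ => N ^ (σ/μ - 1)) atTop atTop := tendsto_rpow_atTop hexp
  have hev : ∀ᶠ N : ℝ in atTop,
      Q₀ < N ^ σ / (8*n) ∧ c * (N ^ σ / (8*n)) ^ (-1/μ) < 1/(8*m*N) := by
    filter_upwards [h1.eventually_gt_atTop Q₀,
      h2.eventually_gt_atTop (8*m*c*(8*n) ^ ((1:ℝ)/μ)), eventually_ge_atTop (1:ℝ)]
      with N e1 e2 hN1
    refine ⟨e1, ?_⟩
    have hN0 : (0:ℝ) < N := lt_of_lt_of_le one_pos hN1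
    set a : ℝ := N ^ (σ/μ) with ha
    set b : ℝ := (8*n) ^ ((1:ℝ)/μ) with hb
    have ha0 : 0 < a := Real.rpow_pos_of_pos hN0 _
    have hb0 : 0 < b := Real.rpow_pos_of_pos h8n _
    have hstepA : (N ^ σ / (8*n)) ^ (-1/μ) = b / a := by
      rw [show (-1/μ : ℝ) = -(1/μ) by ring, Real.rpow_neg (by positivity),
        Real.div_rpow (Real.rpow_nonneg hN0.le σ) h8n.le,
        ← Real.rpow_mul hN0.le, mul_one_div, inv_div]
    have hstepB : N ^ (σ/μ - 1) = a / N := by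
      rw [Real.rpow_sub hN0, Real.rpow_one]
    rw [hstepB] at e2
    rw [hstepA]
    have h3 : 8*m*c*b*N < a := by
      have := (lt_div_iff₀ hN0).mp e2
      linarith
    rw [mul_div_assoc'] at *
    rw [div_lt_div_iff₀ ha0 (by positivity)]
    nlinarith
  rw [Filter.eventually_atTop] at hev
  exact hev

/-- If the transpose of `A` is `σ`-very well approximable for some
`σ > m/n`, and `μ = (m/n + σ)/2`, then for every `c > 0` the set `D_{c,μ}` of `γ ∈ ℝ^m`
admitting arbitrarily large `Q` such that `‖A q - p - γ‖ > c * Q ^ (-1/μ)` for all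
`q ∈ ℤ^n` with `‖q‖ < Q` and all `p ∈ ℤ^m`, has Hausdorff dimension `m`. -/
theorem winning_set_full_dimension
    (m n : ℕ) (hm : 0 < m) (hn : 0 < n) (A : Matrix (Fin m) (Fin n) ℝ)
    (σ : ℝ) (hσ : σ > (m : ℝ) / n)
    (hA : {pq : (Fin n → ℤ) × (Fin m → ℤ) |
      ‖Aᵀ.mulVec (fun i => (pq.2 i : ℝ)) + (fun i => (pq.1 i : ℝ))‖ ≤
        ‖(fun i => (pq.2 i : ℝ))‖ ^ (-σ)}.Infinite)
    (μ : ℝ) (hμ : μ = ((m : ℝ) / n + σ) / 2) (c : ℝ) (hc : 0 < c) :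
    dimH {γ : Fin m → ℝ | ∀ Q₀ : ℝ, ∃ Q > Q₀,
      ∀ q : Fin n → ℤ, ‖(fun i => (q i : ℝ))‖ < Q →
      ∀ p : Fin m → ℤ,
        ‖A.mulVec (fun i => (q i : ℝ)) - (fun i => (p i : ℝ)) - γ‖ >
          c * Q ^ (-1 / μ)} = m := by
  have hn0 : (0:ℝ) < n := by exact_mod_cast hn
  have hm0 : (0:ℝ) < m := by exact_mod_cast hm
  have hmn : (0:ℝ) < (m:ℝ)/n := div_pos hm0 hn0
  have hσ0 : 0 < σ := lt_trans hmn hσ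
  have hμ0 : 0 < μ := by rw [hμ]; linarith
  have hσμ : μ < σ := by rw [hμ]; linarith
  set D := {γ : Fin m → ℝ | ∀ Q₀ : ℝ, ∃ Q > Q₀,
      ∀ q : Fin n → ℤ, ‖(fun i => (q i : ℝ))‖ < Q →
      ∀ p : Fin m → ℤ,
        ‖A.mulVec (fun i => (q i : ℝ)) - (fun i => (p i : ℝ)) - γ‖ >
          c * Q ^ (-1 / μ)} with hD
  -- choose a sequence of good integer vectors with large norms
  choose f hfA hfN using fun k : ℕ => exists_big_y' m n A σ hσ0 hA ((k:ℝ)+1)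
  set yR : ℕ → Fin m → ℝ := fun k i => ((f k).2 i : ℝ) with hyR
  have hy1 : ∀ k, 1 ≤ ‖yR k‖ := fun k =>
    le_trans (by exact_mod_cast le_add_of_nonneg_left (Nat.cast_nonneg k)) (hfN k)
  have hynz : ∀ k, (f k).2 ≠ 0 := by
    intro k h
    have h0 : yR k = 0 := by funext i; simp [hyR, h]
    have := hy1 k
    rw [h0, norm_zero] at this
    linarith
  set S : ℕ → Set (Fin m → ℝ) :=
    fun k => {γ | ∀ j : ℤ, (1:ℝ)/4 ≤ |yR k ⬝ᵥ γ - (j:ℝ)|} with hS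
  set B1 := Metric.closedBall (0 : Fin m → ℝ) 1 with hB1
  set B2 := Metric.closedBall (0 : Fin m → ℝ) 2 with hB2
  set T : ℕ → Set (Fin m → ℝ) := fun K => B2 ∩ ⋃ k, ⋃ (_ : K ≤ k), S k with hT
  have hSmeas : ∀ k, MeasurableSet (S k) := fun k => (slab_closed' (f k).2).measurableSet
  have hTmeas : ∀ K, MeasurableSet (T K) := fun K =>
    Metric.isClosed_closedBall.measurableSet.inter
      (MeasurableSet.iUnion fun k => MeasurableSet.iUnion fun _ => hSmeas k)
  have hTanti : Antitone T := by
    intro K K' hKK'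
    refine inter_subset_inter_right _ ?_
    refine iUnion_mono fun k => ?_
    exact iUnion_subset fun h => subset_iUnion_of_subset (le_trans hKK' h) (subset_refl _)
  have hTlb : ∀ K, volume B1 ≤ 2 * volume (T K) := by
    intro K
    refine (slab_measure' (hynz K)).trans ?_
    refine mul_le_mul_right (measure_mono fun γ hγ => ?_) 2
    exact ⟨hγ.2, mem_iUnion.mpr ⟨K, mem_iUnion.mpr ⟨le_refl K, hγ.1⟩⟩⟩
  set E := ⋂ K, T K with hE
  have hEvol : volume B1 ≤ 2 * volume E := by
    have hfin : ∃ K, volume (T K) ≠ ⊤ :=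
      ⟨0, (lt_of_le_of_lt (measure_mono inter_subset_left) measure_closedBall_lt_top).ne⟩
    have htend := tendsto_measure_iInter_atTop
      (fun K => (hTmeas K).nullMeasurableSet) hTanti hfin
    have htend2 : Tendsto (fun K => 2 * volume (T K)) atTop (𝓝 (2 * volume E)) :=
      ENNReal.Tendsto.const_mul htend (Or.inr (by norm_num))
    exact ge_of_tendsto' htend2 hTlb
  have hB1ne : volume B1 ≠ 0 := (Metric.measure_closedBall_pos volume 0 one_pos).ne'
  have hEpos : volume E ≠ 0 := by
    intro h0
    rw [h0, mul_zero] at hEvol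
    exact hB1ne (le_antisymm hEvol zero_le)
  -- E is contained in the target set
  have hED : E ⊆ D := by
    intro γ hγ Q₀
    obtain ⟨R, hR⟩ := threshold' m n hm hn σ μ c Q₀ hσ0 hμ0 hσμ hc
    have hγT := mem_iInter.mp hγ ⌈R⌉₊
    obtain ⟨hball, hU⟩ := hγT
    rw [mem_iUnion] at hU
    obtain ⟨k, hU⟩ := hU
    rw [mem_iUnion] at hU
    obtain ⟨hk, hγS⟩ := hU
    have hNR : R ≤ ‖yR k‖ := by
      refine le_trans ?_ (hfN k)
      refine (Nat.le_ceil R).trans ?_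
      have : (⌈R⌉₊ : ℝ) ≤ (k : ℝ) := by exact_mod_cast hk
      linarith
    obtain ⟨hQ₀, hQμ⟩ := hR _ hNR
    refine ⟨‖yR k‖ ^ σ / (8*n), hQ₀, fun q hq p => ?_⟩
    exact lt_of_lt_of_le hQμ
      (core_estimate' hm hn A σ (f k).2 (f k).1 (hy1 k) (hfA k) γ hγS q hq p)
  -- conclude on Hausdorff dimension
  refine le_antisymm ?_ ?_
  · exact (dimH_mono (subset_univ _)).trans_eq (Real.dimH_univ_pi_fin m)
  · have hμHE : μH[(m:ℝ)] E ≠ 0 := by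
      rw [show ((m:ℕ):ℝ) = (Fintype.card (Fin m) : ℝ) by simp, hausdorffMeasure_pi_real]
      exact hEpos
    have hμHD : μH[(m:ℝ)] D ≠ 0 := fun h0 =>
      hμHE (le_antisymm (h0 ▸ measure_mono hED) zero_le)
    have h := le_dimH_of_hausdorffMeasure_ne_zero (d := (m : ℝ≥0))
      (by rwa [show ((m : ℝ≥0) : ℝ) = (m:ℝ) by simp])
    simpa using h
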